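/- Under the capacitated-constant two-enforcer protocol, the profile constructed as follows is a pure Nash equilibrium when $n_r \le 2$: regular agents are placed according to Delayed-OPT (machines $1,\dots,r-1$ full, $n_r$ lowest-priority regular agents on machine $r$), and both enforcers are placed on machine $r-1$ (replacing two regular-agent slots, with $r \ge 2$). In this profile: each enforcer pays $\varepsilon_{r-1}$ and has no profitable deviation; each zero-paying regular agent has no profitable deviation; and each regular agent paying a positive share ($c_j$ or $T_j$ on machine $j < r$, or $T_r$ on machine $r$) has no profitable deviation. -/

import Mathlib

open scoped Classical

noncomputable section

/-- Load of machine `j` under profile `s`. -/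
def mload {A : Type*} [Fintype A] {m : ℕ} (s : A → Fin m) (j : Fin m) : ℕ :=
  (Finset.univ.filter fun i => s i = j).card

/-- Cumulative cost `T j = ∑_{k ≤ j} c k` of the first machines in the
Delayed-OPT order. -/
def cumCost {m : ℕ} (c : Fin m → ℝ) (j : Fin m) : ℝ :=
  ∑ k ∈ Finset.Iic j, c k

/-- Cost share of agent `i` under profile `s` in the capacitated-constant
two-enforcer protocol (see STATEMENT 16). -/
def share {A : Type*} [Fintype A] [LinearOrder A] {m : ℕ}
    (c : Fin m → ℝ) (u : Fin m → ℕ) (ε : Fin m → ℝ)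
    (e1 e2 : A) (s : A → Fin m) (i : A) : EReal :=
  let j := s i
  let ld := mload s j
  if i = e1 ∨ i = e2 then
    if ld ≤ u j ∧ s e1 = j ∧ s e2 = j ∧ (∃ i', i' ≠ e1 ∧ i' ≠ e2 ∧ s i' = j) then
      (ε j : EReal)
    else if u j < ld ∧ ((i = e1 ∧ s e2 ≠ j) ∨ (i = e2 ∧ s e1 ≠ j)) then
      (ε j : EReal)
    else (cumCost c j : EReal)
  else
    if u j < ld then (⊤ : EReal)
    else if ¬ (∀ i', i' ≠ e1 → i' ≠ e2 → s i' = j → i ≤ i') then 0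
    else if ld = u j ∧ s e1 ≠ j ∧ s e2 ≠ j then (c j : EReal)
    else (cumCost c j : EReal)


section helpers
set_option linter.unusedSectionVars false
variable {A : Type*} [Fintype A] [LinearOrder A] {m : ℕ}

lemma mload_pos (s : A → Fin m) (i : A) : 1 ≤ mload s (s i) :=
  Finset.card_pos.2 ⟨i, by simp [mload]⟩

lemma mload_update_target (s : A → Fin m) (i : A) (j' : Fin m) (h : s i ≠ j') :
    mload (Function.update s i j') j' = mload s j' + 1 := by
  unfold mload
  rw [show (Finset.univ.filter fun x => Function.update s i j' x = j')
      = insert i (Finset.univ.filter fun x => s x = j') from ?_]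
  · rw [Finset.card_insert_of_notMem (by simp [h])]
  · ext x
    simp only [Finset.mem_filter, Finset.mem_univ, true_and, Finset.mem_insert,
      Function.update_apply]
    by_cases hx : x = i <;> simp [hx, h]

lemma cumCost_mono {c : Fin m → ℝ} (hc : ∀ j, 0 ≤ c j) {j j' : Fin m} (h : j ≤ j') :
    cumCost c j ≤ cumCost c j' :=
  Finset.sum_le_sum_of_subset_of_nonneg (Finset.Iic_subset_Iic.2 h) (fun k _ _ => hc k)

lemma le_cumCost {c : Fin m → ℝ} (hc : ∀ j, 0 ≤ c j) {k j : Fin m} (h : k ≤ j) :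
    c k ≤ cumCost c j :=
  Finset.single_le_sum (fun x _ => hc x) (Finset.mem_Iic.2 h)

lemma cumCost_nonneg {c : Fin m → ℝ} (hc : ∀ j, 0 ≤ c j) (j : Fin m) :
    0 ≤ cumCost c j := Finset.sum_nonneg fun k _ => hc k

lemma share_nonneg (c : Fin m → ℝ) (u : Fin m → ℕ) (ε : Fin m → ℝ) (e1 e2 : A)
    (s : A → Fin m) (i : A)
    (hc : ∀ j, 0 ≤ c j) (hi1 : i ≠ e1) (hi2 : i ≠ e2) :
    (0 : EReal) ≤ share c u ε e1 e2 s i := by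
  unfold share
  simp only [hi1, hi2, or_self, if_false]
  split_ifs <;>
  first
    | exact le_top
    | exact le_rfl
    | exact EReal.coe_nonneg.2 (hc _)
    | exact EReal.coe_nonneg.2 (cumCost_nonneg hc _)

end helpers

/-- Under the capacitated-constant two-enforcer protocol, the
profile in which machines `1, …, r-1` are full, the `n_r ∈ {1,2}` lowest-priority
regular agents sit on machine `r`, machines after `r` are empty, and both
enforcers sit on machine `r-1`, is a pure Nash equilibrium. -/
theorem constructed_profile_is_nash {A : Type*} [Fintype A] [LinearOrder A] {m : ℕ}
    (hm : 0 < m) (c : Fin m → ℝ) (u : Fin m → ℕ) (ε : Fin m → ℝ)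
    (hc : ∀ j, 0 < c j) (hu : ∀ j, 4 ≤ u j)
    (hεpos : ∀ j, 0 < ε j)
    (hεdec : ∀ j j' : Fin m, j < j' → ε j' < ε j)
    (hεsmall : ∀ j, ε j < c ⟨0, hm⟩)
    (e1 e2 : A) (hne : e1 ≠ e2)
    (r : Fin m) (hr : 1 ≤ (r : ℕ))
    (s : A → Fin m)
    -- both enforcers are on machine `r - 1`
    (henf1 : s e1 = ⟨(r : ℕ) - 1, lt_of_le_of_lt (Nat.sub_le _ _) r.2⟩)
    (henf2 : s e2 = ⟨(r : ℕ) - 1, lt_of_le_of_lt (Nat.sub_le _ _) r.2⟩)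
    -- machines before `r` are full, machines after `r` are empty
    (hfull : ∀ j : Fin m, (j : ℕ) < (r : ℕ) → mload s j = u j)
    (hempty : ∀ j : Fin m, (r : ℕ) < (j : ℕ) → mload s j = 0)
    -- machine `r` carries `n_r` agents with `1 ≤ n_r ≤ 2`
    (hnr1 : 1 ≤ mload s r) (hnr2 : mload s r ≤ 2)
    -- the regular agents on machine `r` are the lowest-priority regular agents
    (hlow : ∀ i i' : A, i ≠ e1 → i ≠ e2 → s i = r →
      i' ≠ e1 → i' ≠ e2 → s i' ≠ r → i' < i) :
    ∀ (i : A) (j' : Fin m),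
      share c u ε e1 e2 s i ≤ share c u ε e1 e2 (Function.update s i j') i := by
  intro i j'
  by_cases hji : j' = s i
  · rw [hji, Function.update_eq_self]
  have hji' : s i ≠ j' := fun h => hji h.symm
  have hcnn : ∀ j, 0 ≤ c j := fun j => (hc j).le
  have he21 : s e2 = s e1 := henf2.trans henf1.symm
  have hPv : ((s e1 : Fin m) : ℕ) = (r : ℕ) - 1 := by rw [henf1]
  have hPr : ((s e1 : Fin m) : ℕ) < (r : ℕ) := by omega
  have hPfull : mload s (s e1) = u (s e1) := hfull _ hPr
  have hnone : ∀ j : Fin m, (r : ℕ) < (j : ℕ) → ∀ x, s x ≠ j := by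
    intro j hj x hx
    have h0 := hempty j hj
    have h1 : 1 ≤ mload s j := hx ▸ mload_pos s x
    omega
  set s' := Function.update s i j' with hs'
  have hs'i : s' i = j' := Function.update_self _ _ _
  have hld' : mload s' j' = mload s j' + 1 := mload_update_target s i j' hji'
  have hj'low : ((j' : Fin m) : ℕ) < (r : ℕ) → mload s' j' = u j' + 1 := by
    intro h; rw [hld', hfull j' h]
  have hj'hi : (r : ℕ) ≤ ((j' : Fin m) : ℕ) → mload s' j' ≤ 3 := by
    intro h
    rcases Nat.lt_or_ge (r : ℕ) (j' : ℕ) with h2 | h2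
    · rw [hld', hempty j' h2]; omega
    · have : j' = r := Fin.ext (le_antisymm h2 h)
      rw [hld', this]; omega
  by_cases hie : i = e1 ∨ i = e2
  · -- enforcer deviation
    have hiP : s i = s e1 := by rcases hie with h | h <;> rw [h]; exact he21
    -- old share is ε (s e1)
    have hreg : ∃ i0, i0 ≠ e1 ∧ i0 ≠ e2 ∧ s i0 = s e1 := by
      by_contra hcon
      push_neg at hcon
      have hsub : (Finset.univ.filter fun x => s x = s e1) ⊆ {e1, e2} := by
        intro x hx
        simp only [Finset.mem_filter, Finset.mem_univ, true_and] at hx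
        by_contra hx2
        simp only [Finset.mem_insert, Finset.mem_singleton, not_or] at hx2
        exact hcon x hx2.1 hx2.2 hx
      have h1 := Finset.card_le_card hsub
      have h2 : ({e1, e2} : Finset A).card ≤ 2 :=
        le_trans (Finset.card_insert_le _ _) (by simp)
      have h3 := hu (s e1)
      have h4 : mload s (s e1) ≤ 2 := le_trans h1 h2
      omega
    have hold : share c u ε e1 e2 s i = (ε (s e1) : EReal) := by
      unfold share
      rw [if_pos hie, hiP, if_pos ⟨le_of_eq hPfull, rfl, he21, hreg⟩]
    rw [hold]
    -- other enforcer stays put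
    have hoth : (i = e1 → s' e2 = s e1) ∧ (i = e2 → s' e1 = s e1) := by
      constructor
      · intro h
        rw [hs', Function.update_of_ne (fun hh => hne.symm (hh.trans h))]
        exact he21
      · intro h
        rw [hs', Function.update_of_ne (fun hh => hne (hh.trans h))]
    have hPj' : s e1 ≠ j' := hiP ▸ hji'
    have hcond1 : ¬ (mload s' (s' i) ≤ u (s' i) ∧ s' e1 = s' i ∧ s' e2 = s' i ∧
        (∃ i'0, i'0 ≠ e1 ∧ i'0 ≠ e2 ∧ s' i'0 = s' i)) := by
      rw [hs'i]
      rintro ⟨-, h1, h2, -⟩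
      rcases hie with h | h
      · exact hPj' ((hoth.1 h) ▸ h2 : s e1 = j')
      · exact hPj' ((hoth.2 h) ▸ h1 : s e1 = j')
    have hnew : share c u ε e1 e2 s' i =
        (if u j' < mload s' j' then (ε j' : EReal) else (cumCost c j' : EReal)) := by
      unfold share
      rw [if_pos hie, if_neg hcond1, hs'i]
      by_cases hover : u j' < mload s' j'
      · rw [if_pos hover, if_pos]
        refine ⟨hover, ?_⟩
        rcases hie with h | h
        · exact Or.inl ⟨h, fun hh => hPj' ((hoth.1 h) ▸ hh)⟩
        · exact Or.inr ⟨h, fun hh => hPj' ((hoth.2 h) ▸ hh)⟩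
      · rw [if_neg hover, if_neg (fun hh => hover hh.1)]
    rw [hnew]
    rcases Nat.lt_or_ge ((j' : Fin m) : ℕ) (r : ℕ) with hlt | hge
    · rw [if_pos (by rw [hj'low hlt]; omega)]
      have hjP : j' < s e1 := by
        rw [Fin.lt_def, hPv]
        have : ((j' : Fin m) : ℕ) ≠ (r : ℕ) - 1 := by
          intro h; exact hPj' (Fin.ext (by rw [hPv, h])).symm
        omega
      exact EReal.coe_le_coe_iff.2 (le_of_lt (hεdec j' (s e1) hjP))
    · rw [if_neg (by have := hj'hi hge; have := hu j'; omega)]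
      refine EReal.coe_le_coe_iff.2 (le_of_lt (lt_of_lt_of_le (hεsmall _) ?_))
      exact le_cumCost hcnn (Fin.mk_le_of_le_val (Nat.zero_le _))
  · -- regular agent
    push_neg at hie
    obtain ⟨hi1, hi2⟩ := hie
    have hsir : ((s i : Fin m) : ℕ) ≤ (r : ℕ) := by
      by_contra h
      exact hnone (s i) (by omega) i rfl
    have hnotover : ¬ u (s i) < mload s (s i) := by
      rcases Nat.lt_or_ge ((s i : Fin m) : ℕ) (r : ℕ) with h | h
      · rw [hfull _ h]; omega
      · have : s i = r := Fin.ext (le_antisymm hsir h)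
        rw [this]; have := hu r; omega
    by_cases hmin : ∀ i'', i'' ≠ e1 → i'' ≠ e2 → s i'' = s i → i ≤ i''
    · -- positive-paying regular agent
      have hold : share c u ε e1 e2 s i ≤ (cumCost c (s i) : EReal) := by
        unfold share
        simp only [hi1, hi2, or_self, if_false]
        rw [if_neg hnotover, if_neg (not_not.2 hmin)]
        split_ifs
        · exact EReal.coe_le_coe_iff.2 (le_cumCost hcnn le_rfl)
        · exact le_rfl
      rcases Nat.lt_or_ge ((j' : Fin m) : ℕ) (r : ℕ) with hlt | hge
      · -- deviation to a full machine: infinite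
        have hnew : share c u ε e1 e2 s' i = ⊤ := by
          unfold share
          simp only [hi1, hi2, or_self, if_false]
          rw [hs'i, if_pos (by rw [hj'low hlt]; omega)]
        rw [hnew]; exact le_top
      · -- deviation to machine r or beyond
        have hld3 : mload s' j' ≤ 3 := hj'hi hge
        have hmin' : ∀ i'', i'' ≠ e1 → i'' ≠ e2 → s' i'' = j' → i ≤ i'' := by
          intro i'' h1 h2 h3
          by_cases hieq : i'' = i
          · exact le_of_eq hieq.symm
          · rw [hs', Function.update_of_ne hieq] at h3
            rcases Nat.lt_or_ge (r : ℕ) ((j' : Fin m) : ℕ) with h4 | h4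
            · exact absurd h3 (hnone j' h4 i'')
            · have hj'r : j' = r := Fin.ext (le_antisymm h4 hge)
              have hsir' : s i ≠ r := fun h => hji' (h.trans hj'r.symm)
              exact le_of_lt (hlow i'' i h1 h2 (hj'r ▸ h3) hi1 hi2 hsir')
        have hnew : share c u ε e1 e2 s' i = (cumCost c j' : EReal) := by
          unfold share
          simp only [hi1, hi2, or_self, if_false]
          rw [hs'i, if_neg (by have := hu j'; omega),
            if_neg (not_not.2 hmin'),
            if_neg (fun h => absurd h.1 (by have := hu j'; omega))]
        rw [hnew]
        refine le_trans hold (EReal.coe_le_coe_iff.2 (cumCost_mono hcnn ?_))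
        exact Fin.le_def.2 (le_trans hsir hge)
    · -- zero-paying regular agent
      have hold : share c u ε e1 e2 s i = 0 := by
        unfold share
        simp only [hi1, hi2, or_self, if_false]
        rw [if_neg hnotover, if_pos hmin]
      rw [hold]
      exact share_nonneg c u ε e1 e2 s' i hcnn hi1 hi2

end
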